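/- Let d ≥ 1 and n ≥ d + 1, let c ∈ ℤ^d be a column vector, and let m₁, …, m_d be positive integers such that m_i divides m_{i−1} for 2 ≤ i ≤ d. Let M be the d × n integer matrix whose first column is c, whose columns 2 through d+1 form the diagonal matrix diag(m₁, …, m_d), and whose remaining columns are zero. If the homomorphism ℤⁿ → ℤ^d determined by M is surjective, then m₂ = m₃ = ⋯ = m_d = 1 and gcd(c₁, m₁) = 1, where c₁ is the first entry of c. -/

import Mathlib

theorem row_eq (d n : ℕ) (hd : 0 < d) (hn : d + 1 ≤ n)
    (c : Fin d → ℤ) (m : Fin d → ℤ)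
    (M : Matrix (Fin d) (Fin n) ℤ)
    (hM : ∀ (i : Fin d) (j : Fin n),
      M i j = if (j : ℕ) = (i : ℕ) + 1 then m i else if (j : ℕ) = 0 then c i else 0)
    (i : Fin d) (v : Fin n → ℤ) :
    M.mulVec v i = c i * v ⟨0, by omega⟩ + m i * v ⟨(i : ℕ) + 1, by omega⟩ := by
  have hlt : (i : ℕ) + 1 < n := by omega
  have h0 : (0 : ℕ) < n := by omega
  set j0 : Fin n := ⟨0, h0⟩
  set j1 : Fin n := ⟨(i : ℕ) + 1, hlt⟩
  have key : ∀ j : Fin n, M i j * v j =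
      (if j = j1 then m i * v j else 0) + (if j = j0 then c i * v j else 0) := by
    intro j
    rw [hM]
    by_cases h1 : j = j1
    · subst h1
      have hne : j1 ≠ j0 := by simp [j1, j0, Fin.ext_iff]
      simp [j1, if_neg hne]
    · by_cases h2 : j = j0
      · subst h2
        have : ((j0 : Fin n) : ℕ) ≠ (i : ℕ) + 1 := by simp [j0]
        simp [this, j0, if_neg h1]
      · have e1 : ((j : Fin n) : ℕ) ≠ (i : ℕ) + 1 := fun h =>
          h1 (Fin.ext (by simpa using h))
        have e2 : ((j : Fin n) : ℕ) ≠ 0 := fun h => h2 (Fin.ext (by simpa using h))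
        simp [e1, e2, if_neg h1, if_neg h2]
  simp only [Matrix.mulVec, dotProduct]
  rw [Finset.sum_congr rfl (fun j _ => key j), Finset.sum_add_distrib,
    Finset.sum_ite_eq' Finset.univ j1, Finset.sum_ite_eq' Finset.univ j0]
  simp [add_comm]



/-- Smith-normal-form step of Lemma 5: if the `d × n` matrix `M = (c, diag(m₁,…,m_d), 0)`
(first column `c`, then the diagonal matrix with entries `m₁,…,m_d` satisfying `mᵢ ∣ mᵢ₋₁`,
then zero columns) determines a surjection `ℤⁿ → ℤ^d`, then `m₂ = ⋯ = m_d = 1` and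
`gcd(c₁, m₁) = 1`. -/
theorem stmt_6 (d n : ℕ) (hd : 0 < d) (hn : d + 1 ≤ n)
    (c : Fin d → ℤ) (m : Fin d → ℤ) (hmpos : ∀ i, 0 < m i)
    (hchain : ∀ i : Fin d, ∀ h : (i : ℕ) + 1 < d, m ⟨(i : ℕ) + 1, h⟩ ∣ m i)
    (M : Matrix (Fin d) (Fin n) ℤ)
    (hM : ∀ (i : Fin d) (j : Fin n),
      M i j = if (j : ℕ) = (i : ℕ) + 1 then m i else if (j : ℕ) = 0 then c i else 0)
    (hsurj : Function.Surjective M.mulVec) :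
    (∀ i : Fin d, 0 < (i : ℕ) → m i = 1) ∧
      Int.gcd (c ⟨0, hd⟩) (m ⟨0, hd⟩) = 1 := by
  have h0n : (0:ℕ) < n := by omega
  obtain ⟨v, hv⟩ := hsurj (Pi.single ⟨0, hd⟩ 1)
  have hv0 : c ⟨0, hd⟩ * v ⟨0, h0n⟩ + m ⟨0, hd⟩ * v ⟨1, by omega⟩ = 1 := by
    have := row_eq d n hd hn c m M hM ⟨0, hd⟩ v
    rw [hv] at this
    simpa using this.symm
  constructor
  · have h2 : ∀ k : ℕ, ∀ hk : k < d, 1 ≤ k → ∀ h1d : 1 < d,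
        m ⟨k, hk⟩ ∣ m ⟨1, h1d⟩ := by
      intro k
      induction k with
      | zero => omega
      | succ k ih =>
        intro hk hk1 h1d
        rcases Nat.lt_or_ge k 1 with h | h
        · have : k = 0 := by omega
          subst this; exact dvd_refl _
        · exact dvd_trans (hchain ⟨k, by omega⟩ hk) (ih (by omega) h h1d)
    intro i hi
    have h1d : 1 < d := by have := i.isLt; omega
    have hm1 : m ⟨1, h1d⟩ = 1 := by
      by_contra hne
      have hna : (m ⟨1, h1d⟩).natAbs ≠ 1 := fun h => hne (by
        have := hmpos ⟨1, h1d⟩; omega)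
      obtain ⟨p, hp, hpd⟩ := Int.exists_prime_and_dvd hna
      have hpd0 : p ∣ m ⟨0, hd⟩ := hpd.trans (hchain ⟨0, hd⟩ h1d)
      obtain ⟨a, ha⟩ := hpd
      obtain ⟨b, hb⟩ := hpd0
      obtain ⟨w, hw⟩ := hsurj (Pi.single ⟨1, h1d⟩ 1)
      have hv1 : c ⟨1, h1d⟩ * v ⟨0, h0n⟩ + m ⟨1, h1d⟩ * v ⟨2, by omega⟩ = 0 := by
        have := row_eq d n hd hn c m M hM ⟨1, h1d⟩ v
        rw [hv] at this
        simpa [Pi.single_apply, Fin.ext_iff] using this.symm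
      have hw1 : c ⟨1, h1d⟩ * w ⟨0, h0n⟩ + m ⟨1, h1d⟩ * w ⟨2, by omega⟩ = 1 := by
        have := row_eq d n hd hn c m M hM ⟨1, h1d⟩ w
        rw [hw] at this
        simpa using this.symm
      have hc1 : c ⟨1, h1d⟩ =
          p * (c ⟨1, h1d⟩ * v ⟨1, by omega⟩ * b - c ⟨0, hd⟩ * v ⟨2, by omega⟩ * a) := by
        linear_combination (-(c ⟨1, h1d⟩)) * hv0 + c ⟨0, hd⟩ * hv1 +
          (c ⟨1, h1d⟩ * v ⟨1, by omega⟩) * hb - (c ⟨0, hd⟩ * v ⟨2, by omega⟩) * ha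
      have hone : p ∣ 1 := by
        refine ⟨(c ⟨1, h1d⟩ * v ⟨1, by omega⟩ * b - c ⟨0, hd⟩ * v ⟨2, by omega⟩ * a) *
          w ⟨0, h0n⟩ + a * w ⟨2, by omega⟩, ?_⟩
        linear_combination (-1) * hw1 + w ⟨0, h0n⟩ * hc1 + w ⟨2, (by omega : 2 < n)⟩ * ha
      exact hp.not_dvd_one hone
    have hdvd := h2 (i : ℕ) i.isLt hi h1d
    rw [hm1] at hdvd
    have : (⟨(i : ℕ), i.isLt⟩ : Fin d) = i := rfl
    rw [this] at hdvd
    exact Int.eq_one_of_dvd_one (le_of_lt (hmpos i)) hdvd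
  · rw [← Int.isCoprime_iff_gcd_eq_one]
    exact ⟨v ⟨0, h0n⟩, v ⟨1, by omega⟩, by linarith [hv0]⟩
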